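/- Let g ∈ G(F,F') be hyperbolic and v ∈ V(T). Then the sequence of cosets σ(g^n, g^{-n}(v))·F in Sym(Ω)/F is eventually constant; denote the limit λ_g(v). Moreover: (i) λ_g(v) = σ(g^k, g^{-k}(v)) · λ_g(g^{-k}(v)) for all k ≥ 0; (ii) if g^{-k}(v) ∉ S(g) for all k ≥ 1, then λ_g(g^n(v)) = σ(g^n, v)·F for all n ≥ 0; (iii) λ_g(v) = λ_{g^k}(v) for all k > 0. -/

import Mathlib

open SimpleGraph

theorem Equiv.Perm.apply_inv_self {α : Type*} (f : Equiv.Perm α) (x : α) : f (f⁻¹ x) = x :=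
  f.apply_symm_apply x

theorem Equiv.Perm.inv_apply_self {α : Type*} (f : Equiv.Perm α) (x : α) : f⁻¹ (f x) = x :=
  f.symm_apply_apply x

/-- Walk along an adjacency chain. -/
def axisWalk {V : Type*} (T : SimpleGraph V) (p : ℤ → V)
    (hadj : ∀ i : ℤ, T.Adj (p i) (p (i + 1))) (i : ℤ) : (n : ℕ) → T.Walk (p i) (p (i + n))
  | 0 => Walk.nil.copy rfl (by simp)
  | n + 1 => ((axisWalk T p hadj i n).concat (hadj (i + n))).copy rfl (by push_cast; ring_nf)

lemma axisWalk_length {V : Type*} (T : SimpleGraph V) (p : ℤ → V)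
    (hadj : ∀ i : ℤ, T.Adj (p i) (p (i + 1))) (i : ℤ) (n : ℕ) :
    (axisWalk T p hadj i n).length = n := by
  induction n with
  | zero => simp [axisWalk]
  | succ n ih => simp [axisWalk, Walk.length_concat, ih]

lemma axisWalk_support {V : Type*} (T : SimpleGraph V) (p : ℤ → V)
    (hadj : ∀ i : ℤ, T.Adj (p i) (p (i + 1))) (i : ℤ) (n : ℕ) :
    (axisWalk T p hadj i n).support = (List.range (n + 1)).map (fun j : ℕ => p (i + j)) := by
  induction n with
  | zero => simp [axisWalk, List.range_succ]
  | succ n ih =>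
      rw [axisWalk, Walk.support_copy, Walk.support_concat, ih]
      conv_rhs => rw [List.range_succ]
      rw [List.map_append]
      congr 2
      simp only [List.map_cons, List.map_nil]
      congr 1
      push_cast
      ring

lemma axisWalk_isPath {V : Type*} (T : SimpleGraph V) (p : ℤ → V) (hinj : Function.Injective p)
    (hadj : ∀ i : ℤ, T.Adj (p i) (p (i + 1))) (i : ℤ) (n : ℕ) :
    (axisWalk T p hadj i n).IsPath := by
  classical
  rw [Walk.isPath_def, axisWalk_support]
  refine List.Nodup.map ?_ List.nodup_range
  intro a b hab
  have := hinj hab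
  omega

lemma axis_dist {V : Type*} {T : SimpleGraph V} (hT : T.IsTree) (p : ℤ → V)
    (hinj : Function.Injective p)
    (hadj : ∀ i : ℤ, T.Adj (p i) (p (i + 1))) (i : ℤ) (n : ℕ) :
    T.dist (p i) (p (i + n)) = n := by
  classical
  obtain ⟨w, hw⟩ := hT.isConnected.exists_walk_length_eq_dist (p i) (p (i + n))
  have h1 : w.bypass = axisWalk T p hadj i n :=
    (hT.existsUnique_path (p i) (p (i + n))).unique w.bypass_isPath
      (axisWalk_isPath T p hinj hadj i n)
  have h2 : T.dist (p i) (p (i + n)) ≤ n := by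
    have := SimpleGraph.dist_le (axisWalk T p hadj i n)
    rwa [axisWalk_length] at this
  have h3 : n ≤ T.dist (p i) (p (i + n)) := by
    have := Walk.length_bypass_le w
    rw [h1, axisWalk_length, hw] at this
    exact this
  omega

/-- `p : ℤ → V` is a translation axis for `g` with translation length `l ≥ 1`. -/
def IsTransAxis {V : Type*} (T : SimpleGraph V) (g : Equiv.Perm V) (p : ℤ → V) (l : ℕ) :
    Prop :=
  Function.Injective p ∧ (∀ i : ℤ, T.Adj (p i) (p (i + 1))) ∧ 1 ≤ l ∧
    ∀ i : ℤ, g (p i) = p (i + l)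

/-- Let `g ∈ G(F,F')` be hyperbolic and `v ∈ V(T)`.  Then the sequence
of left cosets `σ(gⁿ, g⁻ⁿ(v))·F` in `Sym(Ω)/F` is eventually constant, with limit
`λ_g(v)`, and:
(i) `λ_g(v) = σ(gᵏ, g⁻ᵏ(v)) • λ_g(g⁻ᵏ(v))` for all `k ≥ 0`;
(ii) if `g⁻ᵏ(v) ∉ S(g)` for all `k ≥ 1`, then `λ_g(gⁿ(v)) = σ(gⁿ, v)·F` for all `n ≥ 0`;
(iii) `λ_g(v) = λ_{gᵏ}(v)` for all `k > 0`. -/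
theorem lambda_exists_and_props {V Ω : Type*} (T : SimpleGraph V) (hT : T.IsTree)
    (c : V → V → Ω)
    (hsym : ∀ u v : V, T.Adj u v → c u v = c v u)
    (hbij : ∀ v : V, Set.BijOn (fun u => c v u) (T.neighborSet v) Set.univ)
    (σ : Equiv.Perm V → V → Equiv.Perm Ω)
    (hσ : ∀ g : Equiv.Perm V, (∀ u w : V, T.Adj u w ↔ T.Adj (g u) (g w)) →
      ∀ v u : V, T.Adj v u → σ g v (c v u) = c (g v) (g u))
    (F F' : Subgroup (Equiv.Perm Ω)) (hFF' : F ≤ F')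
    (g : Equiv.Perm V)
    (hg : ∀ u w : V, T.Adj u w ↔ T.Adj (g u) (g w))
    (hgF' : ∀ v : V, σ g v ∈ F')
    (hgfin : {v : V | σ g v ∉ F}.Finite)
    (pg : ℤ → V) (lg : ℕ) (hpg : IsTransAxis T g pg lg) :
    ∃ Λ : V → Equiv.Perm Ω ⧸ F,
      (∀ u : V, ∃ N : ℕ, ∀ n : ℕ, N ≤ n →
        (QuotientGroup.mk (σ (g ^ n) ((g⁻¹ ^ n) u)) : Equiv.Perm Ω ⧸ F) = Λ u) ∧
      (∀ u : V, ∀ k : ℕ, Λ u = σ (g ^ k) ((g⁻¹ ^ k) u) • Λ ((g⁻¹ ^ k) u)) ∧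
      (∀ u : V, (∀ k : ℕ, 1 ≤ k → σ g ((g⁻¹ ^ k) u) ∈ F) →
        ∀ n : ℕ, Λ ((g ^ n) u) = (QuotientGroup.mk (σ (g ^ n) u) : Equiv.Perm Ω ⧸ F)) ∧
      (∀ u : V, ∀ k : ℕ, 1 ≤ k → ∃ N : ℕ, ∀ n : ℕ, N ≤ n →
        (QuotientGroup.mk (σ ((g ^ k) ^ n) (((g ^ k)⁻¹ ^ n) u)) : Equiv.Perm Ω ⧸ F)
          = Λ u) := by
  classical
  obtain ⟨hpinj, hpadj, hlg, hpax⟩ := hpg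
  -- automorphisms
  set A : Set (Equiv.Perm V) := {h | ∀ u w : V, T.Adj u w ↔ T.Adj (h u) (h w)} with hA
  have hgA : g ∈ A := hg
  have hAmul : ∀ a b : Equiv.Perm V, a ∈ A → b ∈ A → a * b ∈ A := by
    intro a b ha hb u w
    rw [hb u w, ha (b u) (b w)]
    rfl
  have hpow : ∀ n : ℕ, g ^ n ∈ A := by
    intro n
    induction n with
    | zero => intro u w; simp
    | succ n ih => rw [pow_succ]; exact hAmul _ _ ih hgA
  have hginvA : g⁻¹ ∈ A := by
    intro u w
    have := hg (g⁻¹ u) (g⁻¹ w)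
    simp only [Equiv.Perm.apply_inv_self] at this
    exact this.symm
  have hipow : ∀ n : ℕ, g⁻¹ ^ n ∈ A := by
    intro n
    induction n with
    | zero => intro u w; simp
    | succ n ih => rw [pow_succ]; exact hAmul _ _ ih hginvA
  -- cocycle identity
  have coc : ∀ a b : Equiv.Perm V, a ∈ A → b ∈ A → ∀ v : V,
      σ (a * b) v = σ a (b v) * σ b v := by
    intro a b ha hb v
    ext ω
    obtain ⟨u, hu, rfl⟩ := (hbij v).2.2 (Set.mem_univ ω)
    rw [SimpleGraph.mem_neighborSet] at hu
    have h1 := hσ (a * b) (hAmul a b ha hb) v u hu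
    have h2 := hσ b hb v u hu
    have h3 := hσ a ha (b v) (b u) ((hb v u).mp hu)
    simp only [Equiv.Perm.mul_apply]
    rw [h1, h2, h3]
    rfl
  -- the sequence of cosets
  set s : V → ℕ → Equiv.Perm Ω ⧸ F :=
    fun u n => QuotientGroup.mk (σ (g ^ n) ((g⁻¹ ^ n) u)) with hs
  have hstep : ∀ u : V, ∀ n : ℕ, σ g ((g⁻¹ ^ (n + 1)) u) ∈ F → s u (n + 1) = s u n := by
    intro u n hf
    have e2 : g ((g⁻¹ ^ (n + 1)) u) = (g⁻¹ ^ n) u := by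
      rw [pow_succ' g⁻¹ n]
      exact Equiv.Perm.apply_inv_self g ((g⁻¹ ^ n) u)
    have e3 : σ (g ^ (n + 1)) ((g⁻¹ ^ (n + 1)) u)
        = σ (g ^ n) ((g⁻¹ ^ n) u) * σ g ((g⁻¹ ^ (n + 1)) u) := by
      rw [pow_succ, coc (g ^ n) g (hpow n) hgA, e2]
    show QuotientGroup.mk _ = QuotientGroup.mk _
    rw [e3, QuotientGroup.mk_mul_of_mem _ hf]
  -- no fixed points for positive powers of g
  have hmapdist : ∀ h : Equiv.Perm V, h ∈ A → ∀ b c' : V,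
      T.dist (h b) (h c') ≤ T.dist b c' := by
    intro h hh b c'
    obtain ⟨w, hw⟩ := hT.isConnected.exists_walk_length_eq_dist b c'
    have := SimpleGraph.dist_le (w.map ⟨h, fun {x y} hxy => (hh x y).mp hxy⟩)
    rwa [SimpleGraph.Walk.length_map, hw] at this
  have haxis : ∀ j : ℕ, ∀ i : ℤ, (g ^ j) (pg i) = pg (i + j * lg) := by
    intro j
    induction j with
    | zero => intro i; simp
    | succ j ih =>
        intro i
        rw [pow_succ' g j, Equiv.Perm.mul_apply, ih, hpax]
        congr 1
        push_cast
        ring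
  have hNofix : ∀ m : ℕ, 1 ≤ m → ∀ u : V, (g ^ m) u ≠ u := by
    intro m hm u hfix
    have hiter : ∀ n : ℕ, (g ^ (n * m)) u = u := by
      intro n
      induction n with
      | zero => simp
      | succ n ih => rw [Nat.succ_mul, pow_add, Equiv.Perm.mul_apply, hfix, ih]
    set a := T.dist u (pg 0) with ha'
    set n := (2 * a + 1) * m with hn'
    have h1 : pg (0 + ((n * lg : ℕ) : ℤ)) = (g ^ n) (pg 0) := by
      rw [haxis n 0]
      congr 1
      try push_cast
      try ring
    have h2 : T.dist (pg 0) (pg (0 + ((n * lg : ℕ) : ℤ))) = n * lg :=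
      axis_dist hT pg hpinj hpadj 0 (n * lg)
    have h3 : T.dist u (pg (0 + ((n * lg : ℕ) : ℤ))) ≤ a := by
      rw [h1]
      calc T.dist u ((g ^ n) (pg 0)) = T.dist ((g ^ n) u) ((g ^ n) (pg 0)) := by
            rw [hn', hiter (2 * a + 1)]
        _ ≤ T.dist u (pg 0) := hmapdist _ (hpow n) _ _
    have h4 : n * lg ≤ 2 * a := by
      calc n * lg = T.dist (pg 0) (pg (0 + ((n * lg : ℕ) : ℤ))) := h2.symm
        _ ≤ T.dist (pg 0) u + T.dist u (pg (0 + ((n * lg : ℕ) : ℤ))) :=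
            hT.isConnected.dist_triangle
        _ ≤ a + a := by
            rw [SimpleGraph.dist_comm]
            exact add_le_add le_rfl h3
        _ = 2 * a := by ring
    have h5 : 2 * a + 1 ≤ n * lg := by
      calc 2 * a + 1 = (2 * a + 1) * 1 * 1 := by ring
        _ ≤ (2 * a + 1) * m * lg := Nat.mul_le_mul (Nat.mul_le_mul le_rfl hm) hlg
        _ = n * lg := by rw [hn']
    omega
  -- injectivity of the backwards orbit
  have hinj_seq : ∀ u : V, Function.Injective (fun n : ℕ => (g⁻¹ ^ n) u) := by
    intro u
    have key : ∀ n m : ℕ, n < m → (g⁻¹ ^ n) u ≠ (g⁻¹ ^ m) u := by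
      intro n m hlt heq
      set d := m - n with hd'
      have hmd : m = n + d := by omega
      have heq2 : (g⁻¹ ^ n) u = (g⁻¹ ^ n) ((g⁻¹ ^ d) u) := by
        rw [heq, hmd, pow_add]
        rfl
      have heq3 : (g⁻¹ ^ d) u = u := ((g⁻¹ ^ n).injective heq2).symm
      have : (g ^ d) u = u := by
        conv_lhs => rw [← heq3]
        rw [← Equiv.Perm.mul_apply, inv_pow, mul_inv_cancel]
        rfl
      exact hNofix d (by omega) u this
    intro n m hnm
    rcases lt_trichotomy n m with h | h | h
    · exact absurd hnm (key n m h)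
    · exact h
    · exact absurd hnm.symm (key m n h)
  -- eventually the singularity set is avoided
  have hev : ∀ u : V, ∃ N : ℕ, ∀ n : ℕ, N ≤ n → σ g ((g⁻¹ ^ n) u) ∈ F := by
    intro u
    have hfin : {n : ℕ | (g⁻¹ ^ n) u ∈ {v : V | σ g v ∉ F}}.Finite :=
      hgfin.preimage ((hinj_seq u).injOn)
    obtain ⟨N, hN⟩ := hfin.bddAbove
    refine ⟨N + 1, fun n hn => ?_⟩
    by_contra h
    have := hN (Set.mem_setOf.mpr h)
    omega
  -- eventual constancy
  have hconst : ∀ u : V, ∃ q : Equiv.Perm Ω ⧸ F, ∃ N : ℕ, ∀ n : ℕ, N ≤ n → s u n = q := by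
    intro u
    obtain ⟨N, hN⟩ := hev u
    refine ⟨s u N, N, ?_⟩
    intro n hn
    induction n, hn using Nat.le_induction with
    | base => rfl
    | succ n hn ih => rw [hstep u n (hN (n + 1) (by omega)), ih]
  choose Λ Nf hΛ using hconst
  refine ⟨Λ, fun u => ⟨Nf u, fun n hn => hΛ u n hn⟩, ?_, ?_, ?_⟩
  · -- (i)
    intro u k
    set v := (g⁻¹ ^ k) u with hv
    set n := max (Nf u) (Nf v) with hn'
    have e0 : (g⁻¹ ^ n) v = (g⁻¹ ^ (k + n)) u := by
      rw [hv, ← Equiv.Perm.mul_apply, ← pow_add, add_comm]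
    have e1 : σ (g ^ k) v * σ (g ^ n) ((g⁻¹ ^ n) v) = σ (g ^ (k + n)) ((g⁻¹ ^ (k + n)) u) := by
      rw [pow_add, coc (g ^ k) (g ^ n) (hpow k) (hpow n), e0]
      have e2 : (g ^ n) ((g⁻¹ ^ (k + n)) u) = v := by
        rw [hv, add_comm, pow_add, Equiv.Perm.mul_apply, ← Equiv.Perm.mul_apply (g ^ n),
          inv_pow g n, mul_inv_cancel]
        rfl
      rw [e2]
    calc Λ u = s u (k + n) := (hΛ u (k + n) (le_trans (le_max_left _ _) (Nat.le_add_left n k))).symm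
      _ = QuotientGroup.mk (σ (g ^ k) v * σ (g ^ n) ((g⁻¹ ^ n) v)) := by rw [hs, e1]
      _ = σ (g ^ k) v • QuotientGroup.mk (σ (g ^ n) ((g⁻¹ ^ n) v)) := by
          rw [← smul_eq_mul, ← MulAction.Quotient.smul_mk F]
      _ = σ (g ^ k) v • s v n := rfl
      _ = σ (g ^ k) v • Λ v := by rw [hΛ v n (le_max_right _ _)]
  · -- (ii)
    intro u hF n
    have key : ∀ m : ℕ, s ((g ^ n) u) (n + m) = s ((g ^ n) u) n := by
      intro m
      induction m with
      | zero => rfl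
      | succ m ih =>
          have harg : (g⁻¹ ^ (n + m + 1)) ((g ^ n) u) = (g⁻¹ ^ (m + 1)) u := by
            have e : (g⁻¹ ^ (n + m + 1)) = g⁻¹ ^ (m + 1) * g⁻¹ ^ n := by
              rw [← pow_add]
              congr 1
              omega
            rw [e, Equiv.Perm.mul_apply, inv_pow g n, Equiv.Perm.inv_apply_self]
          have hst := hstep ((g ^ n) u) (n + m) (by rw [harg]; exact hF (m + 1) (by omega))
          calc s ((g ^ n) u) (n + (m + 1)) = s ((g ^ n) u) (n + m + 1) := by rw [Nat.add_succ]
            _ = s ((g ^ n) u) (n + m) := hst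
            _ = s ((g ^ n) u) n := ih
    have hend : s ((g ^ n) u) n = QuotientGroup.mk (σ (g ^ n) u) := by
      rw [hs]
      have harg : (g⁻¹ ^ n) ((g ^ n) u) = u := by
        rw [inv_pow, Equiv.Perm.inv_apply_self]
      simp only [harg]
    calc Λ ((g ^ n) u) = s ((g ^ n) u) (n + Nf ((g ^ n) u)) :=
          (hΛ _ _ (by omega)).symm
      _ = s ((g ^ n) u) n := key _
      _ = QuotientGroup.mk (σ (g ^ n) u) := hend
  · -- (iii)
    intro u k hk
    refine ⟨Nf u, fun n hn => ?_⟩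
    have e : (g ^ k) ^ n = g ^ (k * n) := (pow_mul g k n).symm
    have e2 : ((g ^ k)⁻¹) ^ n = g⁻¹ ^ (k * n) := by
      rw [inv_pow, e, ← inv_pow]
    rw [e, e2]
    exact hΛ u (k * n) (le_trans hn (Nat.le_mul_of_pos_left n (by omega)))
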